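/- Let Ψ be an explosive branching mechanism with Φ(λ) = ∫_λ^0 du/Ψ(u), and suppose Ψ(u) → −c ∈ (−∞,0) as u → ∞. Let a_t = u(t,0+) and u(t,λ) as above. Then for each fixed λ > 0, u(t,λ) − a_t converges to c·Φ(λ) as t → ∞. -/

import Mathlib

open Set MeasureTheory Filter

theorem conditional_limit_finite_case (Ψ Φ : ℝ → ℝ) (u : ℝ → ℝ → ℝ) (c : ℝ)
    (hc : 0 < c)
    (hcont : ContinuousOn Ψ (Set.Ioi (0:ℝ)))
    (hneg : ∀ x > (0:ℝ), Ψ x < 0)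
    (hconv : ConvexOn ℝ (Set.Ioi (0:ℝ)) Ψ)
    (hanti : AntitoneOn Ψ (Set.Ioi (0:ℝ)))
    (hint : IntegrableOn (fun x => 1 / (-Ψ x)) (Set.Ioc (0:ℝ) 1))
    (hΦ : ∀ l : ℝ, 0 ≤ l → Φ l = ∫ x in Set.Ioc (0:ℝ) l, 1 / (-Ψ x))
    (hode : ∀ l ≥ (0:ℝ), ∀ t ≥ (0:ℝ), HasDerivAt (fun s => u s l) (-Ψ (u t l)) t)
    (hinit : ∀ l > (0:ℝ), u 0 l = l)
    (hlimΨ : Tendsto Ψ atTop (nhds (-c)))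
    (ha : Tendsto (fun t => u t 0) atTop atTop)
    (hu : ∀ l > (0:ℝ), Tendsto (fun t => u t l) atTop atTop)
    (hPhiId : ∀ l > (0:ℝ), ∀ t ≥ (0:ℝ),
      ∫ x in Set.Ioc (u t 0) (u t l), 1 / (-Ψ x) = Φ l) :
    ∀ l > (0:ℝ), Tendsto (fun t => u t l - u t 0) atTop (nhds (c * Φ l)) := by
  intro l hl
  set f : ℝ → ℝ := fun x => 1 / (-Ψ x) with hfdef
  have hfcont : ContinuousOn f (Set.Ioi (0:ℝ)) := by
    apply ContinuousOn.div continuousOn_const hcont.neg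
    intro x hx
    exact neg_ne_zero.mpr (ne_of_lt (hneg x hx))
  have hΨpos : ∀ x > (0:ℝ), 0 < -Ψ x := fun x hx => neg_pos.mpr (hneg x hx)
  have hΨle : ∀ x > (0:ℝ), -Ψ x ≤ c := by
    intro x hx
    have h : -c ≤ Ψ x := by
      apply le_of_tendsto hlimΨ
      filter_upwards [eventually_ge_atTop x] with y hy
      exact hanti (mem_Ioi.mpr hx) (mem_Ioi.mpr (lt_of_lt_of_le hx hy)) hy
    linarith
  have hfge : ∀ x > (0:ℝ), 1 / c ≤ f x := fun x hx =>
    one_div_le_one_div_of_le (hΨpos x hx) (hΨle x hx)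
  have hfanti : ∀ a b : ℝ, 0 < a → a ≤ b → f b ≤ f a := by
    intro a b ha0 hab
    apply one_div_le_one_div_of_le (hΨpos a ha0)
    have := hanti (mem_Ioi.mpr ha0) (mem_Ioi.mpr (lt_of_lt_of_le ha0 hab)) hab
    linarith
  -- integrability on Ioc 0 l
  have hint_l : IntegrableOn f (Ioc 0 l) := by
    have h2 : IntegrableOn f (Icc 1 (max 1 l)) :=
      (hfcont.mono (fun x hx => lt_of_lt_of_le one_pos hx.1)).integrableOn_Icc
    apply (hint.union h2).mono_set
    intro x hx
    rcases le_or_gt x 1 with h | h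
    · exact Or.inl ⟨hx.1, h⟩
    · exact Or.inr ⟨h.le, le_trans hx.2 (le_max_right 1 l)⟩
  have hΦpos : 0 < Φ l := by
    rw [hΦ l hl.le]
    have hkey : l * (1 / c) ≤ ∫ x in Ioc (0:ℝ) l, f x := by
      have h1 : (∫ x in Ioc (0:ℝ) l, (1 / c : ℝ)) = l * (1 / c) := by
        rw [setIntegral_const, measureReal_def, Real.volume_Ioc, smul_eq_mul,
          ENNReal.toReal_ofReal (by linarith)]
        ring
      rw [← h1]
      apply setIntegral_mono_on
      · exact integrableOn_const measure_Ioc_lt_top.ne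
      · exact hint_l
      · exact measurableSet_Ioc
      · exact fun x hx => hfge x hx.1
    have : 0 < l * (1 / c) := by positivity
    linarith
  have hev : ∀ᶠ t in atTop, 0 < u t 0 ∧ (0:ℝ) ≤ t :=
    (ha.eventually_gt_atTop 0).and (eventually_ge_atTop 0)
  apply tendsto_of_tendsto_of_tendsto_of_le_of_le'
    (g := fun t => (-Ψ (u t 0)) * Φ l) (h := fun t => c * Φ l)
  · have : Tendsto (fun t => -Ψ (u t 0)) atTop (nhds c) := by
      have := (hlimΨ.comp ha).neg
      simpa using this
    exact this.mul_const (Φ l)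
  · exact tendsto_const_nhds
  · filter_upwards [hev] with t ht
    obtain ⟨hA, htt⟩ := ht
    have hPhi := hPhiId l hl t htt
    set A := u t 0 with hAdef
    set B := u t l with hBdef
    have hAB : A < B := by
      by_contra hcon
      rw [Set.Ioc_eq_empty hcon] at hPhi
      simp at hPhi
      exact hΦpos.ne' hPhi.symm
    have hintAB : IntegrableOn f (Ioc A B) :=
      ((hfcont.mono (fun x hx => lt_of_lt_of_le hA hx.1)).integrableOn_Icc).mono_set
        Ioc_subset_Icc_self
    have h1 : Φ l ≤ (B - A) * f A := by
      rw [← hPhi]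
      have hle : (∫ x in Ioc A B, f x) ≤ ∫ x in Ioc A B, f A := by
        apply setIntegral_mono_on hintAB
          (integrableOn_const measure_Ioc_lt_top.ne) measurableSet_Ioc
        exact fun x hx => hfanti A x hA hx.1.le
      have heq : (∫ x in Ioc A B, f A) = (B - A) * f A := by
        rw [setIntegral_const, measureReal_def, Real.volume_Ioc, smul_eq_mul,
          ENNReal.toReal_ofReal (by linarith)]
      rw [← heq]; exact hle
    have hpos := hΨpos A hA
    have h1' : Φ l ≤ (B - A) / (-Ψ A) := by
      rw [mul_one_div] at h1; exact h1
    have := (le_div_iff₀ hpos).mp h1'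
    nlinarith [this]
  · filter_upwards [hev] with t ht
    obtain ⟨hA, htt⟩ := ht
    have hPhi := hPhiId l hl t htt
    set A := u t 0 with hAdef
    set B := u t l with hBdef
    have hAB : A < B := by
      by_contra hcon
      rw [Set.Ioc_eq_empty hcon] at hPhi
      simp at hPhi
      exact hΦpos.ne' hPhi.symm
    have hintAB : IntegrableOn f (Ioc A B) :=
      ((hfcont.mono (fun x hx => lt_of_lt_of_le hA hx.1)).integrableOn_Icc).mono_set
        Ioc_subset_Icc_self
    have h2 : (B - A) * (1 / c) ≤ Φ l := by
      rw [← hPhi]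
      have heq : (∫ x in Ioc A B, (1 / c : ℝ)) = (B - A) * (1 / c) := by
        rw [setIntegral_const, measureReal_def, Real.volume_Ioc, smul_eq_mul,
          ENNReal.toReal_ofReal (by linarith)]
      rw [← heq]
      apply setIntegral_mono_on
        (integrableOn_const measure_Ioc_lt_top.ne) hintAB measurableSet_Ioc
      intro x hx
      exact hfge x (lt_trans hA hx.1)
    have : (B - A) / c ≤ Φ l := by rw [mul_one_div] at h2; exact h2
    nlinarith [(div_le_iff₀ hc).mp this]
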